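/- arXiv:1704.05651 — 2 statements merged into one kernel-verified Lean document; each statement's English description precedes it below -/
import Mathlib

section
/- Suppose u ∈ C²(Ω) is harmonic on the open upper half ball B₁⁺ = {x ∈ ℝⁿ : |x| < 1, xₙ > 0}, continuous on its closure, u ≥ 0, and u vanishes on the flat part {xₙ = 0, |x| < 1}. If u(x₀) > 0 for some x₀ ∈ B₁⁺, then for every x in the closed half ball of radius 1/2 one has u(x) ≥ c·xₙ for some constant c > 0 (depending on u). -/
open scoped BigOperators RealInnerProductSpace

variable {n : ℕ}

local notation "E" => EuclideanSpace ℝ (Fin n)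

/-- The Euclidean Laplacian of `u : ℝⁿ → ℝ` at `x`. -/
noncomputable def lap (u : EuclideanSpace ℝ (Fin n) → ℝ)
    (x : EuclideanSpace ℝ (Fin n)) : ℝ :=
  ∑ i, fderiv ℝ (fun y => fderiv ℝ u y (EuclideanSpace.single i 1)) x (EuclideanSpace.single i 1)

noncomputable def bar (y : E) (α : ℝ) (z : E) : ℝ := Real.exp (-α * ⟪z - y, z - y⟫)

lemma hasFDerivAt_q (y z : E) :
    HasFDerivAt (fun w : E => ⟪w - y, w - y⟫)
      ((fderivInnerCLM ℝ (z - y, z - y)).comp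
        ((ContinuousLinearMap.id ℝ E).prod (ContinuousLinearMap.id ℝ E))) z := by
  have h : HasFDerivAt (fun w : E => w - y) (ContinuousLinearMap.id ℝ E) z :=
    (hasFDerivAt_id (𝕜 := ℝ) z).sub_const y
  exact HasFDerivAt.inner ℝ h h

lemma hasFDerivAt_bar (y : E) (α : ℝ) (z : E) :
    HasFDerivAt (bar y α)
      (bar y α z • ((-α) • ((fderivInnerCLM ℝ (z - y, z - y)).comp
        ((ContinuousLinearMap.id ℝ E).prod (ContinuousLinearMap.id ℝ E))))) z := by
  have h1 := (hasFDerivAt_q y z).const_mul (-α)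
  exact h1.exp

lemma fderiv_bar_apply (y : E) (α : ℝ) (z e : E) :
    fderiv ℝ (bar y α) z e = (-2*α*⟪z - y, e⟫) * bar y α z := by
  rw [(hasFDerivAt_bar y α z).fderiv]
  simp only [ContinuousLinearMap.smul_apply, ContinuousLinearMap.coe_comp',
    Function.comp_apply, ContinuousLinearMap.prod_apply, ContinuousLinearMap.coe_id', id_eq,
    fderivInnerCLM_apply, smul_eq_mul]
  rw [real_inner_comm e (z - y)]
  ring

lemma norm_sq_eq (w : E) : ‖w‖^2 = ∑ i, (w i)^2 := by
  rw [EuclideanSpace.norm_eq, Real.sq_sqrt (by positivity)]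
  simp [sq_abs]

lemma coord_abs_le_norm (w : E) (i : Fin n) : |w i| ≤ ‖w‖ := by
  have h1 : (w i)^2 ≤ ‖w‖^2 := by
    rw [norm_sq_eq]
    exact Finset.single_le_sum (fun j _ => sq_nonneg (w j)) (Finset.mem_univ i)
  calc |w i| = Real.sqrt ((w i)^2) := (Real.sqrt_sq_eq_abs _).symm
  _ ≤ Real.sqrt (‖w‖^2) := Real.sqrt_le_sqrt h1
  _ = ‖w‖ := by rw [Real.sqrt_sq (norm_nonneg w)]

lemma contDiff_bar (y : E) (α : ℝ) : ContDiff ℝ 2 (bar y α) := by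
  have hq : ContDiff ℝ 2 (fun w : E => ⟪w - y, w - y⟫) :=
    ContDiff.inner ℝ (contDiff_id.sub contDiff_const) (contDiff_id.sub contDiff_const)
  exact Real.contDiff_exp.comp (contDiff_const.mul hq)

lemma fderiv_bar_fun (y : E) (α : ℝ) (i : Fin n) :
    (fun w : E => fderiv ℝ (bar y α) w (EuclideanSpace.single i 1))
      = fun w => (-2*α*(w i - y i)) * bar y α w := by
  funext w
  rw [fderiv_bar_apply]
  have : ⟪w - y, EuclideanSpace.single i (1:ℝ)⟫ = w i - y i := by
    rw [EuclideanSpace.inner_single_right]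
    simp [PiLp.sub_apply]
  rw [this]

lemma lap_bar (y : E) (α : ℝ) (z : E) :
    lap (bar y α) z = (4*α^2*‖z - y‖^2 - 2*α*n) * bar y α z := by
  have key : ∀ i : Fin n,
      fderiv ℝ (fun w => fderiv ℝ (bar y α) w (EuclideanSpace.single i 1)) z
          (EuclideanSpace.single i 1)
        = (4*α^2*(z i - y i)^2 - 2*α) * bar y α z := by
    intro i
    rw [fderiv_bar_fun]
    have hci : HasFDerivAt (fun w : E => -2*α*(w i - y i))
        ((-2*α) • (EuclideanSpace.proj i : E →L[ℝ] ℝ)) z :=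
      (((EuclideanSpace.proj i : E →L[ℝ] ℝ).hasFDerivAt).sub_const (y i)).const_mul (-2*α)
    have hmul := hci.mul (hasFDerivAt_bar y α z)
    rw [show (fun w : E => -2*α*(w i - y i) * bar y α w) = (fun w : E => -2*α*(w i - y i)) * bar y α from rfl, hmul.fderiv]
    have h2 : ⟪EuclideanSpace.single i (1:ℝ), z - y⟫ = z i - y i := by
      rw [real_inner_comm, EuclideanSpace.inner_single_right]
      simp [PiLp.sub_apply]
    have h3 : ⟪z - y, EuclideanSpace.single i (1:ℝ)⟫ = z i - y i := by
      rw [EuclideanSpace.inner_single_right]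
      simp [PiLp.sub_apply]
    have h4 : (EuclideanSpace.proj i : E →L[ℝ] ℝ) (EuclideanSpace.single i (1:ℝ)) = 1 := by
      simp [EuclideanSpace.single_apply]
    simp only [ContinuousLinearMap.add_apply, ContinuousLinearMap.smul_apply,
      ContinuousLinearMap.coe_comp', Function.comp_apply, ContinuousLinearMap.prod_apply,
      ContinuousLinearMap.coe_id', id_eq, fderivInnerCLM_apply, smul_eq_mul, h2, h3, h4]
    ring
  rw [lap]
  rw [Finset.sum_congr rfl (fun i _ => key i)]
  rw [← Finset.sum_mul, norm_sq_eq]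
  rw [Finset.sum_sub_distrib]
  simp [Finset.mul_sum, PiLp.sub_apply, Finset.card_univ]
  try ring
  try exact Or.inl trivial

lemma lap_combo (u : E → ℝ) (D : Set E) (hD : IsOpen D) (hu : ContDiffOn ℝ 2 u D)
    (c d : ℝ) (y : E) (α : ℝ) (p : E) (hp : p ∈ D) :
    lap (fun z => c * bar y α z + d - u z) p = c * lap (bar y α) p - lap u p := by
  have hupt : ∀ z ∈ D, ContDiffAt ℝ 2 u z := fun z hz => hu.contDiffAt (hD.mem_nhds hz)
  have key : ∀ i : Fin n,
      fderiv ℝ (fun w => fderiv ℝ (fun z => c * bar y α z + d - u z) w (EuclideanSpace.single i 1)) p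
          (EuclideanSpace.single i 1)
        = c * fderiv ℝ (fun w => fderiv ℝ (bar y α) w (EuclideanSpace.single i 1)) p
              (EuclideanSpace.single i 1)
          - fderiv ℝ (fun w => fderiv ℝ u w (EuclideanSpace.single i 1)) p
              (EuclideanSpace.single i 1) := by
    intro i
    set e := EuclideanSpace.single i (1:ℝ) with he
    have ev : (fun w => fderiv ℝ (fun z => c * bar y α z + d - u z) w e)
        =ᶠ[nhds p] (fun w => c * fderiv ℝ (bar y α) w e - fderiv ℝ u w e) := by
      filter_upwards [hD.mem_nhds hp] with w hw
      have hb := ((hasFDerivAt_bar y α w).const_mul c).add_const d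
      have hu' : HasFDerivAt u (fderiv ℝ u w) w :=
        ((hupt w hw).differentiableAt (by norm_num)).hasFDerivAt
      have := (hb.sub hu').fderiv
      rw [show (fun z => c * bar y α z + d - u z) = (fun x => c * bar y α x + d) - u from rfl, this]
      simp [(hasFDerivAt_bar y α w).fderiv]
    rw [ev.fderiv_eq]
    have hdbar : DifferentiableAt ℝ (fun w => fderiv ℝ (bar y α) w e) p := by
      have h1 : ContDiff ℝ 1 (fderiv ℝ (bar y α)) :=
        (contDiff_bar y α).fderiv_right (by norm_num)
      exact (h1.differentiable one_ne_zero p).clm_apply (differentiableAt_const e)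
    have hdu : DifferentiableAt ℝ (fun w => fderiv ℝ u w e) p := by
      have h1 : ContDiffAt ℝ 1 (fderiv ℝ u) p := (hupt p hp).fderiv_right (by norm_num)
      exact (h1.differentiableAt one_ne_zero).clm_apply (differentiableAt_const e)
    rw [fderiv_fun_sub (hdbar.const_mul c) hdu]
    rw [fderiv_const_mul hdbar c]
    simp
  rw [lap, lap, lap, Finset.sum_congr rfl (fun i _ => key i), Finset.sum_sub_distrib,
    Finset.mul_sum]

lemma not_isLocalMax_of_lap_pos (v : E → ℝ) (D : Set E) (hD : IsOpen D)
    (hv : ContDiffOn ℝ 2 v D) (p : E) (hp : p ∈ D) (hl : 0 < lap v p) :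
    ¬ IsLocalMax v p := by
  intro hmax
  obtain ⟨i, hi⟩ : ∃ i : Fin n, 0 < fderiv ℝ
      (fun w => fderiv ℝ v w (EuclideanSpace.single i 1)) p (EuclideanSpace.single i 1) := by
    by_contra hcon
    push_neg at hcon
    have : lap v p ≤ 0 := Finset.sum_nonpos (fun i _ => hcon i)
    linarith
  set e := EuclideanSpace.single i (1:ℝ) with he
  have hvpt : ∀ z ∈ D, ContDiffAt ℝ 2 v z := fun z hz => hv.contDiffAt (hD.mem_nhds hz)
  have hdist : ∀ t : ℝ, dist (p + t • e) p = |t| := by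
    intro t
    rw [dist_eq_norm]
    simp [norm_smul, he]
  obtain ⟨r, hr0, hrD⟩ := Metric.isOpen_iff.mp hD p hp
  have hmem : ∀ t : ℝ, |t| < r → p + t • e ∈ D := by
    intro t ht
    exact hrD (by rw [Metric.mem_ball, hdist]; exact ht)
  set g : ℝ → ℝ := fun t => v (p + t • e) with hg
  set h : ℝ → ℝ := fun t => fderiv ℝ v (p + t • e) e with hh
  have hline : ∀ t : ℝ, HasDerivAt (fun s : ℝ => p + s • e) e t := by
    intro t
    have h1 : HasDerivAt (fun s : ℝ => s • e) ((1:ℝ) • e) t :=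
      (hasDerivAt_id t).smul_const e
    simpa using h1.const_add p
  have hg' : ∀ t : ℝ, |t| < r → HasDerivAt g (h t) t := by
    intro t ht
    have hd : DifferentiableAt ℝ v (p + t • e) :=
      ((hvpt _ (hmem t ht)).differentiableAt (by norm_num))
    exact hd.hasFDerivAt.comp_hasDerivAt t (hline t)
  have hgmax : IsLocalMax g 0 := by
    have hcont : ContinuousAt (fun s : ℝ => p + s • e) 0 := (hline 0).continuousAt
    have h0 : (fun s : ℝ => p + s • e) 0 = p := by simp
    have h2 := hcont.tendsto
    simp only [zero_smul, add_zero] at h2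
    have h4 := h2.eventually hmax
    refine h4.mono fun t ht => ?_
    show v (p + t • e) ≤ v (p + (0:ℝ) • e)
    simpa using ht
  have hh0 : h 0 = 0 := by
    have := (hg' 0 (by simpa using hr0)).deriv
    rw [← this]
    exact hgmax.deriv_eq_zero
  have hhd : HasDerivAt h (fderiv ℝ
      (fun w => fderiv ℝ v w e) p e) 0 := by
    have h1 : ContDiffAt ℝ 1 (fderiv ℝ v) p := (hvpt p hp).fderiv_right (by norm_num)
    have hφ : DifferentiableAt ℝ (fun w => fderiv ℝ v w e) p :=
      (h1.differentiableAt one_ne_zero).clm_apply (differentiableAt_const e)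
    have hφ' : HasFDerivAt (fun w => fderiv ℝ v w e)
        (fderiv ℝ (fun w => fderiv ℝ v w e) p) (p + (0:ℝ) • e) := by
      simpa using hφ.hasFDerivAt
    have := hφ'.comp_hasDerivAt 0 (hline 0)
    exact this
  have hslope : ∀ᶠ t in nhdsWithin 0 {(0:ℝ)}ᶜ, 0 < slope h 0 t :=
    (hasDerivAt_iff_tendsto_slope.mp hhd).eventually (eventually_gt_nhds hi)
  rw [eventually_nhdsWithin_iff] at hslope
  obtain ⟨δ, hδ0, hδ⟩ := Metric.eventually_nhds_iff.mp hslope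
  obtain ⟨ε, hε0, hε⟩ := Metric.eventually_nhds_iff.mp hmax
  set t₁ : ℝ := min r (min δ ε) / 2 with ht₁
  have ht₁0 : 0 < t₁ := by positivity
  have ht₁r : t₁ < r := by
    have : t₁ ≤ r / 2 := by
      apply div_le_div_of_nonneg_right _ (by norm_num)
      · exact min_le_left _ _
    linarith
  have ht₁δ : t₁ < δ := by
    have : t₁ ≤ δ / 2 := by
      apply div_le_div_of_nonneg_right _ (by norm_num)
      · exact (min_le_right _ _).trans (min_le_left _ _)
    linarith
  have ht₁ε : t₁ < ε := by
    have : t₁ ≤ ε / 2 := by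
      apply div_le_div_of_nonneg_right _ (by norm_num)
      · exact (min_le_right _ _).trans (min_le_right _ _)
    linarith
  have hpos : ∀ t ∈ Set.Ioo (0:ℝ) t₁, 0 < h t := by
    intro t ⟨ht0, htt⟩
    have habs : |t| < δ := by
      rw [abs_of_pos ht0]; linarith
    have hs := hδ (show dist t 0 < δ by simpa [Real.dist_eq, sub_zero] using habs)
      (by simp [ne_of_gt ht0])
    have hst : slope h 0 t = h t / t := by
      rw [slope_def_field, hh0]
      ring_nf
    rw [hst] at hs
    have := (div_pos_iff.mp hs)
    rcases this with ⟨h1, _⟩ | ⟨_, h2⟩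
    · exact h1
    · linarith
  have hmono : StrictMonoOn g (Set.Icc 0 t₁) := by
    apply strictMonoOn_of_deriv_pos (convex_Icc 0 t₁)
    · intro x hx
      have : |x| < r := by
        rw [abs_of_nonneg hx.1]
        exact lt_of_le_of_lt hx.2 ht₁r
      exact (hg' x this).continuousAt.continuousWithinAt
    · intro x hx
      rw [interior_Icc] at hx
      have hxr : |x| < r := by
        rw [abs_of_pos hx.1]; exact lt_trans hx.2 ht₁r
      rw [(hg' x hxr).deriv]
      exact hpos x hx
  have h1 : g 0 < g t₁ := hmono (Set.left_mem_Icc.mpr ht₁0.le)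
    (Set.right_mem_Icc.mpr ht₁0.le) ht₁0
  have h2 : g t₁ ≤ g 0 := by
    have : dist (p + t₁ • e) p < ε := by
      rw [hdist, abs_of_pos ht₁0]; exact ht₁ε
    simpa [hg] using hε this
  linarith

lemma bar_eq (y z : E) (α : ℝ) : bar y α z = Real.exp (-α * (dist z y)^2) := by
  rw [bar, real_inner_self_eq_norm_sq, dist_eq_norm]

lemma max_on_frontier (v : E → ℝ) (A : Set E) (hA : IsOpen A) (hAne : A.Nonempty)
    (hcomp : IsCompact (closure A)) (hv2 : ContDiffOn ℝ 2 v A)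
    (hvc : ContinuousOn v (closure A)) (hlap : ∀ x ∈ A, 0 < lap v x) :
    ∃ p ∈ closure A, p ∉ A ∧ ∀ x ∈ closure A, v x ≤ v p := by
  obtain ⟨p, hpmem, hmax⟩ := hcomp.exists_isMaxOn (hAne.mono subset_closure) hvc
  refine ⟨p, hpmem, ?_, fun x hx => hmax hx⟩
  intro hpA
  have hloc : IsLocalMax v p := by
    filter_upwards [hA.mem_nhds hpA] with z hz
    exact hmax (subset_closure hz)
  exact not_isLocalMax_of_lap_pos v A hA hv2 p hpA (hlap p hpA) hloc

lemma ann (hn1 : 0 < n) (u : E → ℝ) (D : Set E) (hD : IsOpen D)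
    (hu2 : ContDiffOn ℝ 2 u D) (hharm : ∀ x ∈ D, lap u x = 0)
    (y : E) (ρ R α m : ℝ) (hρ : 0 < ρ) (hρR : ρ < R)
    (hα : (n:ℝ) ≤ 2*α*ρ^2) (hα0 : 0 < α) (hm : 0 < m)
    (hsub : ∀ z : E, ρ < dist z y → dist z y < R → z ∈ D)
    (hcontu : ContinuousOn u {z : E | ρ ≤ dist z y ∧ dist z y ≤ R})
    (hinner : ∀ z : E, dist z y = ρ → m ≤ u z)
    (houter : ∀ z : E, dist z y = R → 0 ≤ u z) :
    ∀ z : E, ρ ≤ dist z y → dist z y ≤ R →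
      m * (Real.exp (-α * (dist z y)^2) - Real.exp (-α*R^2)) /
        (Real.exp (-α*ρ^2) - Real.exp (-α*R^2)) ≤ u z := by
  set C : ℝ := Real.exp (-α*ρ^2) - Real.exp (-α*R^2) with hCdef
  have hC : 0 < C := by
    have h1 : 0 < α * ((R - ρ) * (R + ρ)) :=
      mul_pos hα0 (mul_pos (by linarith) (by linarith))
    have h2 : -α*R^2 < -α*ρ^2 := by nlinarith
    have := Real.exp_lt_exp.mpr h2
    simp only [hCdef]
    linarith
  have hCne : C ≠ 0 := ne_of_gt hC
  set A : Set E := {z : E | ρ < dist z y ∧ dist z y < R} with hAdef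
  have hAopen : IsOpen A := by
    have : A = (fun z : E => dist z y) ⁻¹' (Set.Ioo ρ R) := rfl
    rw [this]
    exact isOpen_Ioo.preimage (continuous_id.dist continuous_const)
  have hAD : A ⊆ D := fun z hz => hsub z hz.1 hz.2
  have hAne : A.Nonempty := by
    have hd : dist (y + ((ρ+R)/2) • EuclideanSpace.single ⟨0, hn1⟩ (1:ℝ)) y = (ρ+R)/2 := by
      rw [dist_eq_norm]
      simp [norm_smul]
      linarith
    exact ⟨y + ((ρ+R)/2) • EuclideanSpace.single ⟨0, hn1⟩ (1:ℝ),
      by rw [Set.mem_setOf_eq, hd]; constructor <;> linarith⟩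
  have hclos : closure A ⊆ {z : E | ρ ≤ dist z y ∧ dist z y ≤ R} := by
    apply closure_minimal
    · exact fun z hz => ⟨hz.1.le, hz.2.le⟩
    · have : {z : E | ρ ≤ dist z y ∧ dist z y ≤ R}
          = (fun z : E => dist z y) ⁻¹' (Set.Icc ρ R) := rfl
      rw [this]
      exact isClosed_Icc.preimage (continuous_id.dist continuous_const)
  have hcomp : IsCompact (closure A) := by
    apply (isCompact_closedBall y R).of_isClosed_subset isClosed_closure
    exact fun z hz => Metric.mem_closedBall.mpr (hclos hz).2
  set v : E → ℝ := fun z => (m/C) * bar y α z + (-(m/C) * Real.exp (-α*R^2)) - u z with hvdef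
  have hbarcont : Continuous (fun z : E => (m/C) * bar y α z + (-(m/C) * Real.exp (-α*R^2))) :=
    (continuous_const.mul ((contDiff_bar y α).continuous)).add continuous_const
  have hv2 : ContDiffOn ℝ 2 v A := by
    apply ContDiffOn.sub _ (hu2.mono hAD)
    exact ((contDiff_const.mul (contDiff_bar y α)).add contDiff_const).contDiffOn
  have hvc : ContinuousOn v (closure A) :=
    (hbarcont.continuousOn).sub (hcontu.mono hclos)
  have hlapv : ∀ x ∈ A, 0 < lap v x := by
    intro x hx
    have hcombo := lap_combo u D hD hu2 (m/C) (-(m/C) * Real.exp (-α*R^2)) y α x (hAD hx)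
    rw [hvdef]
    rw [hcombo, hharm x (hAD hx), lap_bar]
    have hbp : 0 < bar y α x := Real.exp_pos _
    have hmc : 0 < m / C := div_pos hm hC
    have hd : ρ < dist x y := hx.1
    have h2 : 0 < 4*α^2*‖x - y‖^2 - 2*α*n := by
      rw [← dist_eq_norm]
      have hd2 : ρ^2 < (dist x y)^2 := by nlinarith [dist_nonneg (x := x) (y := y)]
      have h3 : (n:ℝ) < 2*α*(dist x y)^2 := by nlinarith
      nlinarith
    linarith [mul_pos hmc (mul_pos h2 hbp)]
  obtain ⟨p, hpc, hpA, hmax⟩ := max_on_frontier v A hAopen hAne hcomp hv2 hvc hlapv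
  have hvp : v p ≤ 0 := by
    have hp2 := hclos hpc
    have : dist p y = ρ ∨ dist p y = R := by
      rcases lt_or_eq_of_le hp2.1 with h1 | h1
      · rcases lt_or_eq_of_le hp2.2 with h2 | h2
        · exact absurd ⟨h1, h2⟩ hpA
        · exact Or.inr h2
      · exact Or.inl h1.symm
    rcases this with h | h
    · have hb : bar y α p = Real.exp (-α*ρ^2) := by rw [bar_eq, h]
      have hup := hinner p h
      rw [hvdef]
      simp only
      rw [hb]
      have h9 : m / C * Real.exp (-α*ρ^2) + -(m / C) * Real.exp (-α*R^2) = m / C * C := by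
        rw [hCdef]; ring
      rw [h9, div_mul_cancel₀ _ hCne]
      linarith
    · have hb : bar y α p = Real.exp (-α*R^2) := by rw [bar_eq, h]
      have hup := houter p h
      rw [hvdef]
      simp only
      rw [hb]
      linarith
  intro z hz1 hz2
  rcases eq_or_lt_of_le hz1 with h1 | h1
  · have hb : Real.exp (-α * (dist z y)^2) = Real.exp (-α*ρ^2) := by rw [← h1]
    rw [hb]
    have h9 : m * (Real.exp (-α * ρ ^ 2) - Real.exp (-α * R ^ 2)) / C = m := by
      rw [← hCdef, mul_div_assoc, div_self hCne, mul_one]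
    rw [h9]
    exact hinner z h1.symm
  rcases eq_or_lt_of_le hz2 with h2 | h2
  · rw [h2]
    have : m * (Real.exp (-α * R ^ 2) - Real.exp (-α * R ^ 2)) / C = 0 := by
      simp
    rw [this]
    exact houter z h2
  · have hzA : z ∈ A := ⟨h1, h2⟩
    have := hmax z (subset_closure hzA)
    have hvz : v z ≤ 0 := le_trans this hvp
    rw [hvdef] at hvz
    simp only at hvz
    rw [bar_eq] at hvz
    have hgoal : m * (Real.exp (-α * (dist z y)^2) - Real.exp (-α*R^2)) / C
        = m / C * Real.exp (-α * (dist z y) ^ 2) + -(m / C) * Real.exp (-α * R ^ 2) := by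
      ring
    rw [hgoal]
    linarith

lemma exp_diff_pos (α a b : ℝ) (hα : 0 < α) (h0 : 0 ≤ a) (hab : a < b) :
    0 < Real.exp (-α*a^2) - Real.exp (-α*b^2) := by
  have h2 : -α*b^2 < -α*a^2 := by
    nlinarith [mul_pos hα (mul_pos (sub_pos.mpr hab) (by linarith : (0:ℝ) < a + b))]
  linarith [Real.exp_lt_exp.mpr h2]

lemma exp_slope (α R t : ℝ) (hα : 0 < α) (hR : 0 < R) (ht : 0 ≤ t) (ht2 : t ≤ R/2) :
    α*R*Real.exp (-α*R^2)*t ≤ Real.exp (-α*(R-t)^2) - Real.exp (-α*R^2) := by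
  have key : Real.exp (-α*(R-t)^2) = Real.exp (-α*R^2) * Real.exp (α*t*(2*R - t)) := by
    rw [← Real.exp_add]; ring_nf
  rw [key]
  have h1 : α*t*(2*R-t) + 1 ≤ Real.exp (α*t*(2*R-t)) := Real.add_one_le_exp _
  have h2 : 0 < Real.exp (-α*R^2) := Real.exp_pos _
  nlinarith [mul_le_mul_of_nonneg_left h1 h2.le,
    mul_nonneg h2.le (mul_nonneg (mul_nonneg hα.le ht) (by linarith : (0:ℝ) ≤ R - t))]

lemma closed_half_subset_closure (hn1 : 0 < n) (j : Fin n) :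
    {x : E | ‖x‖ ≤ 1 ∧ 0 ≤ x j} ⊆ closure {x : E | ‖x‖ < 1 ∧ 0 < x j} := by
  intro x hx
  set q : E := EuclideanSpace.single j (1/2 : ℝ) with hq
  have hmem : ∀ k : ℕ, x + (1/(k+1) : ℝ) • (q - x) ∈ {x : E | ‖x‖ < 1 ∧ 0 < x j} := by
    intro k
    set t : ℝ := 1/(k+1) with htdef
    have ht0 : 0 < t := by positivity
    have ht1 : t ≤ 1 := by
      rw [htdef]
      rw [div_le_one (by positivity)]
      norm_num
    have hrepr : x + t • (q - x) = (1-t) • x + t • q := by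
      rw [smul_sub, sub_smul, one_smul]
      abel
    constructor
    · show ‖x + t • (q - x)‖ < 1
      rw [hrepr]
      calc ‖(1-t) • x + t • q‖ ≤ ‖(1-t) • x‖ + ‖t • q‖ := norm_add_le _ _
      _ = (1-t) * ‖x‖ + t * ‖q‖ := by
          rw [norm_smul, norm_smul, Real.norm_eq_abs, Real.norm_eq_abs,
            abs_of_nonneg (by linarith), abs_of_pos ht0]
      _ ≤ (1-t) * 1 + t * (1/2) := by
          have hnq : ‖q‖ = 1/2 := by
            rw [hq, EuclideanSpace.norm_single]
            norm_num
          rw [hnq]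
          have := hx.1
          nlinarith
      _ < 1 := by linarith
    · show 0 < (x + t • (q - x)) j
      have happ : (x + t • (q - x)) j = (1-t) * x j + t * (1/2) := by
        rw [hrepr]
        simp [PiLp.add_apply, PiLp.smul_apply, hq, EuclideanSpace.single_apply, smul_eq_mul]
      rw [happ]
      have := hx.2
      nlinarith
  have h1 : Filter.Tendsto (fun k : ℕ => (1/(k+1) : ℝ)) Filter.atTop (nhds 0) :=
    tendsto_one_div_add_atTop_nhds_zero_nat
  have h2 := (h1.smul_const (q - x)).const_add x
  have h3 : Filter.Tendsto (fun k : ℕ => x + (1/(k+1) : ℝ) • (q - x)) Filter.atTop (nhds x) := by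
    simpa using h2
  exact mem_closure_of_tendsto h3 (Filter.Eventually.of_forall hmem)

lemma pos_on (hn : 2 ≤ n) (u : E → ℝ) (B₁p : Set E) (j : Fin n)
    (hB : B₁p = {x : E | ‖x‖ < 1 ∧ 0 < x j})
    (hu2 : ContDiffOn ℝ 2 u B₁p) (hharm : ∀ x ∈ B₁p, lap u x = 0)
    (hcont : ContinuousOn u (closure B₁p)) (hnonneg : ∀ x ∈ closure B₁p, 0 ≤ u x)
    (x₀ : E) (hx₀ : x₀ ∈ B₁p) (hpos : 0 < u x₀) :
    ∀ x ∈ B₁p, 0 < u x := by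
  have hn0 : 0 < n := by omega
  have hopen : IsOpen B₁p := by
    rw [hB]
    have : {x : E | ‖x‖ < 1 ∧ 0 < x j} = {x : E | ‖x‖ < 1} ∩ {x : E | 0 < x j} := rfl
    rw [this]
    exact (isOpen_lt continuous_norm continuous_const).inter
      (isOpen_lt continuous_const (EuclideanSpace.proj j).continuous)
  have hconv : Convex ℝ B₁p := by
    rw [hB]
    have : {x : E | ‖x‖ < 1 ∧ 0 < x j} = Metric.ball (0:E) 1 ∩ {x : E | 0 < x j} := by
      ext z
      simp [Metric.mem_ball, dist_eq_norm]
    rw [this]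
    refine (convex_ball 0 1).inter (convex_halfSpace_gt ?_ 0)
    exact ⟨fun a b => by simp [PiLp.add_apply], fun c a => by simp [PiLp.smul_apply]⟩
  have hcontAt : ∀ x ∈ B₁p, ContinuousAt u x := fun x hx =>
    (hu2.continuousOn).continuousAt (hopen.mem_nhds hx)
  set U : Set E := {z : E | z ∈ B₁p ∧ 0 < u z} with hUdef
  have hKEY : ∀ x ∈ B₁p, x ∈ closure U → 0 < u x := by
    intro x hx hxcl
    have hx' := hB ▸ hx
    have hx1 : ‖x‖ < 1 := hx'.1
    have hx2 : 0 < x j := hx'.2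
    set R : ℝ := min (1 - ‖x‖) (x j) / 2 with hRdef
    have hR0 : 0 < R := by
      rw [hRdef]
      have : 0 < min (1 - ‖x‖) (x j) := lt_min (by linarith) hx2
      linarith
    have hR1 : R ≤ (1 - ‖x‖) / 2 := by
      rw [hRdef]
      have := min_le_left (1 - ‖x‖) (x j)
      linarith
    have hR2 : R ≤ x j / 2 := by
      rw [hRdef]
      have := min_le_right (1 - ‖x‖) (x j)
      linarith
    have hball : Metric.closedBall x R ⊆ B₁p := by
      intro z hz
      rw [Metric.mem_closedBall] at hz
      rw [hB]
      constructor
      · have h4 : ‖z‖ ≤ ‖x‖ + ‖z - x‖ := by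
          linarith [norm_sub_norm_le z x]
        have h5 : ‖z - x‖ ≤ R := by rwa [← dist_eq_norm]
        calc ‖z‖ ≤ ‖x‖ + R := by linarith
        _ < 1 := by linarith
      · have h4 : |(z - x) j| ≤ ‖z - x‖ := coord_abs_le_norm _ _
        have h5 : ‖z - x‖ ≤ R := by rwa [← dist_eq_norm]
        have h6 : (z - x) j = z j - x j := PiLp.sub_apply _ _ _ _
        have := abs_le.mp h4
        have h7 : x j - R ≤ z j := by
          rw [h6] at this
          linarith [this.1]
        linarith
    obtain ⟨p, hpU, hdxp⟩ := Metric.mem_closure_iff.mp hxcl (R/4) (by linarith)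
    by_cases hpx : p = x
    · rw [← hpx]; exact hpU.2
    have hd0 : 0 < dist x p := dist_pos.mpr (fun h => hpx h.symm)
    have hev := (hcontAt p hpU.1).eventually (eventually_gt_nhds (half_lt_self hpU.2))
    obtain ⟨δ₀, hδ₀0, hδ₀⟩ := Metric.eventually_nhds_iff.mp hev
    set δ : ℝ := min (δ₀/2) (dist x p / 2) with hδdef
    have hδ0 : 0 < δ := lt_min (by linarith) (by linarith)
    have hδa : δ ≤ δ₀/2 := min_le_left _ _
    have hδb : δ ≤ dist x p / 2 := min_le_right _ _
    set α : ℝ := n / δ^2 with hαdef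
    have hα0 : 0 < α := by positivity
    have hα : (n:ℝ) ≤ 2*α*δ^2 := by
      have h9 : 2*α*δ^2 = 2*n := by
        rw [hαdef]
        field_simp
      rw [h9]
      have : (0:ℝ) ≤ (n:ℝ) := Nat.cast_nonneg n
      linarith
    have hres := ann hn0 u B₁p hopen hu2 hharm p δ (R/2) α (u p / 2) hδ0
      (by linarith) hα hα0 (half_pos hpU.2)
      (fun z h1 h2 => hball (Metric.mem_closedBall.mpr (by
        have := dist_triangle z p x
        have hpx' : dist p x = dist x p := dist_comm p x
        linarith)))
      (hcont.mono (fun z hz => subset_closure (hball (Metric.mem_closedBall.mpr (by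
        have := dist_triangle z p x
        have hpx' : dist p x = dist x p := dist_comm p x
        have := hz.2
        linarith)))))
      (fun z hz => by
        have h8 : dist z p < δ₀ := by rw [hz]; linarith
        exact (hδ₀ h8).le)
      (fun z hz => hnonneg z (subset_closure (hball (Metric.mem_closedBall.mpr (by
        have := dist_triangle z p x
        have hpx' : dist p x = dist x p := dist_comm p x
        rw [hz] at this
        linarith)))))
    have hfin := hres x (by linarith) (by linarith)
    have hnum : 0 < Real.exp (-α * (dist x p)^2) - Real.exp (-α*(R/2)^2) :=
      exp_diff_pos α (dist x p) (R/2) hα0 dist_nonneg (by linarith)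
    have hden : 0 < Real.exp (-α*δ^2) - Real.exp (-α*(R/2)^2) :=
      exp_diff_pos α δ (R/2) hα0 hδ0.le (by linarith)
    calc (0:ℝ) < u p / 2 * (Real.exp (-α * (dist x p)^2) - Real.exp (-α*(R/2)^2))
        / (Real.exp (-α*δ^2) - Real.exp (-α*(R/2)^2)) := by
          apply div_pos (mul_pos (half_pos hpU.2) hnum) hden
    _ ≤ u x := hfin
  have hUopen : IsOpen U := by
    rw [isOpen_iff_mem_nhds]
    intro z hz
    have h1 := hopen.mem_nhds hz.1
    have h2 := (hcontAt z hz.1).eventually (eventually_gt_nhds hz.2)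
    filter_upwards [h1, h2] with w hw1 hw2
    exact ⟨hw1, hw2⟩
  by_contra hcon
  push_neg at hcon
  obtain ⟨x₁, hx₁, hx₁u⟩ := hcon
  have hx₁cl : x₁ ∉ closure U := fun h => absurd hx₁u (not_le.mpr (hKEY x₁ hx₁ h))
  have hpre := hconv.isPreconnected
  have htrip := hpre U (closure U)ᶜ hUopen isClosed_closure.isOpen_compl
    (fun z hz => by
      by_cases h : z ∈ closure U
      · exact Or.inl ⟨hz, hKEY z hz h⟩
      · exact Or.inr h)
    ⟨x₀, hx₀, hx₀, hpos⟩ ⟨x₁, hx₁, hx₁cl⟩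
  obtain ⟨w, _, hwU, hwc⟩ := htrip
  exact hwc (subset_closure hwU)

/-- Hopf-type lower bound: a nonnegative harmonic function on the upper unit half-ball,
continuous up to the closure, vanishing on the flat boundary portion and positive somewhere,
is bounded below by a multiple of `xₙ` on the half-ball of radius `1/2`. -/
theorem stmt6 (hn : 2 ≤ n) (u : EuclideanSpace ℝ (Fin n) → ℝ)
    (B₁p : Set (EuclideanSpace ℝ (Fin n)))
    (hB : B₁p = {x | ‖x‖ < 1 ∧ 0 < x ⟨n - 1, by omega⟩})
    (hu2 : ContDiffOn ℝ 2 u B₁p)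
    (hharm : ∀ x ∈ B₁p, lap u x = 0)
    (hcont : ContinuousOn u (closure B₁p))
    (hnonneg : ∀ x ∈ closure B₁p, 0 ≤ u x)
    (hbdry : ∀ x : EuclideanSpace ℝ (Fin n),
      ‖x‖ < 1 → x ⟨n - 1, by omega⟩ = 0 → u x = 0)
    (x₀ : EuclideanSpace ℝ (Fin n)) (hx₀ : x₀ ∈ B₁p) (hpos : 0 < u x₀) :
    ∃ c > 0, ∀ x : EuclideanSpace ℝ (Fin n),
      ‖x‖ ≤ 1 / 2 → 0 ≤ x ⟨n - 1, by omega⟩ → c * x ⟨n - 1, by omega⟩ ≤ u x := by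
  have hn0 : 0 < n := by omega
  set j : Fin n := ⟨n - 1, by omega⟩ with hjdef
  have hupos : ∀ x ∈ B₁p, 0 < u x :=
    pos_on hn u B₁p j hB hu2 hharm hcont hnonneg x₀ hx₀ hpos
  have hopen : IsOpen B₁p := by
    rw [hB]
    have : {x : E | ‖x‖ < 1 ∧ 0 < x j} = {x : E | ‖x‖ < 1} ∩ {x : E | 0 < x j} := rfl
    rw [this]
    exact (isOpen_lt continuous_norm continuous_const).inter
      (isOpen_lt continuous_const (EuclideanSpace.proj j).continuous)
  have hclosure : {x : E | ‖x‖ ≤ 1 ∧ 0 ≤ x j} ⊆ closure B₁p := by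
    rw [hB]; exact closed_half_subset_closure hn0 j
  -- the compact set K and minimum ε
  set K : Set E := Metric.closedBall (0:E) (7/8) ∩ {z : E | 1/16 ≤ z j} with hKdef
  have hKcomp : IsCompact K := (isCompact_closedBall (0:E) (7/8)).inter_right
    (isClosed_le continuous_const (EuclideanSpace.proj j).continuous)
  have hKB : K ⊆ B₁p := by
    intro z hz
    rw [hB]
    have h1 : ‖z‖ ≤ 7/8 := mem_closedBall_zero_iff.mp hz.1
    exact ⟨lt_of_le_of_lt h1 (by norm_num), lt_of_lt_of_le (by norm_num) hz.2⟩
  have hKne : K.Nonempty := by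
    refine ⟨EuclideanSpace.single j (1/2 : ℝ), ?_, ?_⟩
    · rw [Metric.mem_closedBall, dist_zero_right, EuclideanSpace.norm_single]
      norm_num
    · show (1:ℝ)/16 ≤ EuclideanSpace.single j (1/2 : ℝ) j
      rw [EuclideanSpace.single_apply]
      norm_num
  obtain ⟨z₀, hz₀K, hz₀min⟩ := hKcomp.exists_isMinOn hKne
    (hcont.mono (fun z hz => subset_closure (hKB hz)))
  set ε : ℝ := u z₀ with hεdef
  have hε : 0 < ε := hupos z₀ (hKB hz₀K)
  have hKmin : ∀ z ∈ K, ε ≤ u z := fun z hz => hz₀min hz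
  -- constants
  set α : ℝ := 128 * n with hαdef
  have hα0 : 0 < α := mul_pos (by norm_num) (Nat.cast_pos.mpr hn0)
  set Cd : ℝ := Real.exp (-α*(1/16)^2) - Real.exp (-α*(1/8)^2) with hCddef
  have hCd : 0 < Cd := exp_diff_pos α (1/16) (1/8) hα0 (by norm_num) (by norm_num)
  set β : ℝ := α*(1/8)*Real.exp (-α*(1/8)^2) with hβdef
  have hβ : 0 < β := mul_pos (mul_pos hα0 (by norm_num)) (Real.exp_pos _)
  set c : ℝ := min ε (ε * β / Cd) with hcdef
  have hc : 0 < c := lt_min hε (div_pos (mul_pos hε hβ) hCd)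
  refine ⟨c, hc, ?_⟩
  intro x hx1 hx2
  rcases eq_or_lt_of_le hx2 with h0 | h0
  · rw [← h0, mul_zero]
    exact hnonneg x (hclosure ⟨by linarith, by rw [← h0]⟩)
  have hxj1 : x j ≤ 1 := by
    have := le_trans (le_abs_self (x j)) (coord_abs_le_norm x j)
    linarith
  by_cases hbig : 1/16 ≤ x j
  · have hxK : x ∈ K := ⟨mem_closedBall_zero_iff.mpr (by linarith), hbig⟩
    have h1 : ε ≤ u x := hKmin x hxK
    calc c * x j ≤ ε * x j := mul_le_mul_of_nonneg_right (min_le_left _ _) hx2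
    _ ≤ ε * 1 := mul_le_mul_of_nonneg_left hxj1 hε.le
    _ ≤ u x := by linarith
  · push_neg at hbig
    set s : ℝ := 1/8 - x j with hsdef
    have hs1 : 1/16 < s := by rw [hsdef]; linarith
    have hs2 : s < 1/8 := by rw [hsdef]; linarith
    set y : E := x + s • EuclideanSpace.single j (1:ℝ) with hydef
    have hyj : y j = 1/8 := by
      rw [hydef]
      rw [PiLp.add_apply, PiLp.smul_apply, EuclideanSpace.single_apply]
      simp [hsdef]
    have hdxy : dist x y = s := by
      rw [dist_eq_norm]
      have h5 : x - y = -(s • EuclideanSpace.single j (1:ℝ)) := by rw [hydef]; abel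
      rw [h5, norm_neg, norm_smul, EuclideanSpace.norm_single]
      simp [abs_of_pos (show (0:ℝ) < s by rw [hsdef]; linarith)]
    have hny : ‖y‖ ≤ 5/8 := by
      rw [hydef]
      calc ‖x + s • EuclideanSpace.single j (1:ℝ)‖
          ≤ ‖x‖ + ‖s • EuclideanSpace.single j (1:ℝ)‖ := norm_add_le _ _
      _ ≤ 1/2 + 1/8 := by
          rw [norm_smul, EuclideanSpace.norm_single]
          have : ‖s‖ ≤ 1/8 := by
            rw [Real.norm_eq_abs, abs_of_pos (show (0:ℝ) < s by rw [hsdef]; linarith)]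
            linarith
          simp only [norm_one, mul_one]
          linarith
      _ = 5/8 := by norm_num
    have hcoord : ∀ z : E, 1/8 - dist z y ≤ z j := by
      intro z
      have h4 : |(z - y) j| ≤ ‖z - y‖ := coord_abs_le_norm _ _
      have h6 : (z - y) j = z j - y j := PiLp.sub_apply _ _ _ _
      rw [h6, hyj] at h4
      have := (abs_le.mp h4).1
      rw [← dist_eq_norm] at this
      linarith
    have hnormz : ∀ z : E, dist z y ≤ 1/8 → ‖z‖ ≤ 3/4 := by
      intro z hz
      have h4 := norm_sub_norm_le z y
      rw [← dist_eq_norm] at h4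
      linarith
    have hαρ : (n:ℝ) ≤ 2*α*(1/16:ℝ)^2 := by
      have h9 : 2*α*(1/16:ℝ)^2 = n := by rw [hαdef]; ring
      rw [h9]
    have hres := ann hn0 u B₁p hopen hu2 hharm y (1/16) (1/8) α ε (by norm_num)
      (by norm_num) hαρ hα0 hε
      (fun z h1 h2 => by
        rw [hB]
        refine ⟨lt_of_le_of_lt (hnormz z h2.le) (by norm_num), ?_⟩
        have := hcoord z
        show (0:ℝ) < z j
        linarith)
      (hcont.mono (fun z hz => hclosure ⟨by
          have := hnormz z hz.2
          linarith, by
          have := hcoord z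
          have := hz.2
          linarith⟩))
      (fun z hz => by
        apply hKmin
        constructor
        · rw [Metric.mem_closedBall, dist_zero_right]
          have : dist z y ≤ 1/8 := by rw [hz]; norm_num
          have := hnormz z this
          linarith
        · show (1:ℝ)/16 ≤ z j
          have := hcoord z
          rw [hz] at this
          linarith)
      (fun z hz => hnonneg z (hclosure ⟨by
          have : dist z y ≤ 1/8 := by rw [hz]
          have := hnormz z this
          linarith, by
          have := hcoord z
          rw [hz] at this
          linarith⟩))
    have hfin := hres x (by rw [hdxy]; linarith) (by rw [hdxy]; linarith)
    rw [hdxy] at hfin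
    have hslope := exp_slope α (1/8) (x j) hα0 (by norm_num) hx2 (by linarith)
    have hsrw : -α*(1/8 - x j)^2 = -α*s^2 := by rw [hsdef]
    rw [hsrw] at hslope
    -- combine
    have h11 : β * x j ≤ Real.exp (-α*s^2) - Real.exp (-α*(1/8)^2) := by
      rw [hβdef]
      calc α*(1/8)*Real.exp (-α*(1/8)^2) * x j
          ≤ α*(1/8)*Real.exp (-α*(1/8)^2)*(x j) := le_refl _
      _ ≤ Real.exp (-α*(1/8 - x j)^2) - Real.exp (-α*(1/8)^2) := hslope
      _ = Real.exp (-α*s^2) - Real.exp (-α*(1/8)^2) := by rw [hsrw]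
    calc c * x j ≤ (ε * β / Cd) * x j := mul_le_mul_of_nonneg_right (min_le_right _ _) hx2
    _ = ε * (β * x j) / Cd := by ring
    _ ≤ ε * (Real.exp (-α*s^2) - Real.exp (-α*(1/8)^2)) / Cd := by
        gcongr
    _ ≤ u x := hfin
end

section
/- Let R > 0 and let u be continuous on the closure of ℝⁿ₊ \ B_R, superharmonic (−Δu ≥ 0 in the distributional sense) on ℝⁿ₊ \ cl(B_R), nonnegative, with u(x',0) = 0 for |x'| > R. If m := inf{u(y)/yₙ : y ∈ ∂B_R, yₙ > 0} is finite, then u(x) ≥ m·Rⁿ·xₙ/|x|ⁿ for all x ∈ ℝⁿ₊ with |x| ≥ R. -/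
open scoped BigOperators

variable {n : ℕ}

noncomputable def Sq (x : EuclideanSpace ℝ (Fin n)) : ℝ := ∑ i, x i * x i

lemma Sq_eq_norm (x : EuclideanSpace ℝ (Fin n)) : Sq x = ‖x‖ ^ 2 := by
  rw [EuclideanSpace.norm_eq, Real.sq_sqrt]
  · simp [Sq, Real.norm_eq_abs, sq_abs, sq]
  · positivity

lemma hproj (i : Fin n) (x : EuclideanSpace ℝ (Fin n)) :
    HasFDerivAt (fun y : EuclideanSpace ℝ (Fin n) => y i)
      (EuclideanSpace.proj (𝕜 := ℝ) i) x :=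
  (EuclideanSpace.proj (𝕜 := ℝ) i).hasFDerivAt

noncomputable def DSq (x : EuclideanSpace ℝ (Fin n)) : EuclideanSpace ℝ (Fin n) →L[ℝ] ℝ :=
  ∑ i, (2 * x i) • (EuclideanSpace.proj (𝕜 := ℝ) i)

lemma hasFDerivAt_Sq (x : EuclideanSpace ℝ (Fin n)) : HasFDerivAt Sq (DSq x) x := by
  have h : ∀ i : Fin n, HasFDerivAt (fun y : EuclideanSpace ℝ (Fin n) => y i * y i)
      ((2 * x i) • (EuclideanSpace.proj (𝕜 := ℝ) i)) x := by
    intro i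
    have := (hproj i x).fun_mul (hproj i x)
    simpa only [two_mul, add_smul] using this
  have := HasFDerivAt.fun_sum (fun i (_ : i ∈ Finset.univ) => h i)
  exact this

lemma DSq_apply (x : EuclideanSpace ℝ (Fin n)) (j : Fin n) :
    DSq x (EuclideanSpace.single j 1) = 2 * x j := by
  simp [DSq, ContinuousLinearMap.sum_apply, EuclideanSpace.single_apply]

noncomputable def Vh (ν : Fin n) (x : EuclideanSpace ℝ (Fin n)) : ℝ :=
  x ν * Sq x ^ (-(n:ℝ)/2)

lemma hasFDerivAt_Vh (ν : Fin n) {x : EuclideanSpace ℝ (Fin n)} (hx : Sq x ≠ 0) :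
    HasFDerivAt (Vh ν)
      (x ν • ((-(n:ℝ)/2 * Sq x ^ (-(n:ℝ)/2 - 1)) • DSq x)
        + (Sq x ^ (-(n:ℝ)/2)) • (EuclideanSpace.proj (𝕜 := ℝ) ν)) x := by
  exact (hproj ν x).mul ((hasFDerivAt_Sq x).rpow_const (Or.inl hx))

lemma fderiv_Vh_apply (ν : Fin n) {x : EuclideanSpace ℝ (Fin n)} (hx : Sq x ≠ 0) (i : Fin n) :
    fderiv ℝ (Vh ν) x (EuclideanSpace.single i 1)
      = x ν * ((-(n:ℝ)/2 * Sq x ^ (-(n:ℝ)/2 - 1)) * (2 * x i))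
        + Sq x ^ (-(n:ℝ)/2) * (if ν = i then 1 else 0) := by
  rw [(hasFDerivAt_Vh ν hx).fderiv]
  simp [DSq_apply, EuclideanSpace.single_apply]

/-- The explicit formula for the `i`-th partial derivative of `Vh`. -/
noncomputable def Pv (ν i : Fin n) (x : EuclideanSpace ℝ (Fin n)) : ℝ :=
  x ν * ((-(n:ℝ)/2 * Sq x ^ (-(n:ℝ)/2 - 1)) * (2 * x i))
    + Sq x ^ (-(n:ℝ)/2) * (if ν = i then 1 else 0)

lemma hasFDerivAt_Pv (ν i : Fin n) {x : EuclideanSpace ℝ (Fin n)} (hx : Sq x ≠ 0) :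
    HasFDerivAt (Pv ν i)
      (x ν • ((-(n:ℝ)/2 * Sq x ^ (-(n:ℝ)/2-1)) •
          ((2:ℝ) • (EuclideanSpace.proj (𝕜 := ℝ) i))
        + (2 * x i) • ((-(n:ℝ)/2) • (((-(n:ℝ)/2-1) * Sq x ^ (-(n:ℝ)/2-1-1)) • DSq x)))
      + (-(n:ℝ)/2 * Sq x ^ (-(n:ℝ)/2-1) * (2 * x i)) • (EuclideanSpace.proj (𝕜 := ℝ) ν)
      + (if ν = i then (1:ℝ) else 0) • ((-(n:ℝ)/2 * Sq x ^ (-(n:ℝ)/2-1)) • DSq x)) x := by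
  have hBC := ((((hasFDerivAt_Sq x).rpow_const (p := -(n:ℝ)/2-1) (Or.inl hx)).const_mul (-(n:ℝ)/2)).mul
    ((hproj i x).const_mul 2))
  have h1 := (hproj ν x).mul hBC
  have h2 := ((hasFDerivAt_Sq x).rpow_const (p := -(n:ℝ)/2) (Or.inl hx)).mul_const
    (if ν = i then (1:ℝ) else 0)
  have h := h1.add h2
  exact h


lemma Sq_continuous : Continuous (Sq (n := n)) :=
  continuous_iff_continuousAt.2 fun x => (hasFDerivAt_Sq x).differentiableAt.continuousAt

lemma isOpen_Sq_ne : IsOpen {y : EuclideanSpace ℝ (Fin n) | Sq y ≠ 0} :=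
  isOpen_compl_singleton.preimage Sq_continuous

lemma eventually_fderiv_Vh (ν i : Fin n) {x : EuclideanSpace ℝ (Fin n)} (hx : Sq x ≠ 0) :
    (fun y => fderiv ℝ (Vh ν) y (EuclideanSpace.single i 1)) =ᶠ[nhds x] Pv ν i := by
  filter_upwards [isOpen_Sq_ne.mem_nhds hx] with y hy
  exact fderiv_Vh_apply ν hy i

lemma fderiv_Pv_apply (ν i : Fin n) {x : EuclideanSpace ℝ (Fin n)} (hx : Sq x ≠ 0) :
    fderiv ℝ (Pv ν i) x (EuclideanSpace.single i 1)
      = 2 * (-(n:ℝ)/2) * x ν * Sq x ^ (-(n:ℝ)/2-1)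
        + 4 * (-(n:ℝ)/2) * ((-(n:ℝ)/2)-1) * x ν * (x i * x i) * Sq x ^ (-(n:ℝ)/2-1-1)
        + (if ν = i then 4 * (-(n:ℝ)/2) * Sq x ^ (-(n:ℝ)/2-1) * x i else 0) := by
  rw [(hasFDerivAt_Pv ν i hx).fderiv]
  simp only [ContinuousLinearMap.add_apply, ContinuousLinearMap.smul_apply, DSq_apply,
    PiLp.proj_apply, EuclideanSpace.single_apply, smul_eq_mul]
  split_ifs <;> ring

lemma differentiableAt_fderiv_Vh (ν i : Fin n) {x : EuclideanSpace ℝ (Fin n)}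
    (hx : Sq x ≠ 0) :
    DifferentiableAt ℝ (fun y => fderiv ℝ (Vh ν) y (EuclideanSpace.single i 1)) x :=
  ((hasFDerivAt_Pv ν i hx).congr_of_eventuallyEq
    (eventually_fderiv_Vh ν i hx)).differentiableAt

lemma lap_Vh (ν : Fin n) {x : EuclideanSpace ℝ (Fin n)} (hx : 0 < Sq x) :
    lap (Vh ν) x = 0 := by
  unfold lap
  have step : ∀ i : Fin n,
      fderiv ℝ (fun y => fderiv ℝ (Vh ν) y (EuclideanSpace.single i 1)) x
        (EuclideanSpace.single i 1)
      = 2 * (-(n:ℝ)/2) * x ν * Sq x ^ (-(n:ℝ)/2-1)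
        + 4 * (-(n:ℝ)/2) * ((-(n:ℝ)/2)-1) * x ν * (x i * x i) * Sq x ^ (-(n:ℝ)/2-1-1)
        + (if ν = i then 4 * (-(n:ℝ)/2) * Sq x ^ (-(n:ℝ)/2-1) * x i else 0) := by
    intro i
    rw [(eventually_fderiv_Vh ν i hx.ne').fderiv_eq]
    exact fderiv_Pv_apply ν i hx.ne'
  rw [Finset.sum_congr rfl (fun i _ => step i)]
  rw [Finset.sum_add_distrib, Finset.sum_add_distrib]
  rw [Finset.sum_const, Finset.card_univ, Fintype.card_fin]
  rw [Finset.sum_ite_eq Finset.univ ν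
    (fun i => 4 * (-(n:ℝ)/2) * Sq x ^ (-(n:ℝ)/2-1) * x i)]
  have hsum2 : ∑ i : Fin n, 4 * (-(n:ℝ)/2) * ((-(n:ℝ)/2)-1) * x ν * (x i * x i)
      * Sq x ^ (-(n:ℝ)/2-1-1)
      = 4 * (-(n:ℝ)/2) * ((-(n:ℝ)/2)-1) * x ν * Sq x ^ (-(n:ℝ)/2-1-1) * Sq x := by
    rw [← Finset.sum_mul, ← Finset.mul_sum]
    rw [show (Sq x = ∑ i : Fin n, x i * x i) from rfl]
    ring
  rw [hsum2]
  have hpow : Sq x ^ (-(n:ℝ)/2-1-1) * Sq x = Sq x ^ (-(n:ℝ)/2-1) := by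
    nth_rewrite 2 [← Real.rpow_one (Sq x)]
    rw [← Real.rpow_add hx]
    norm_num
  rw [mul_assoc _ (Sq x ^ (-(n:ℝ)/2-1-1)) (Sq x), hpow]
  simp only [Finset.mem_univ, if_true, nsmul_eq_mul]
  ring

lemma fderiv_Sq_fun (i : Fin n) :
    (fun y : EuclideanSpace ℝ (Fin n) => fderiv ℝ Sq y (EuclideanSpace.single i 1))
      = fun y => 2 * y i :=
  funext fun y => by rw [(hasFDerivAt_Sq y).fderiv, DSq_apply]

lemma lap_Sq (x : EuclideanSpace ℝ (Fin n)) : lap Sq x = 2 * n := by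
  unfold lap
  have step : ∀ i : Fin n,
      fderiv ℝ (fun y => fderiv ℝ Sq y (EuclideanSpace.single i 1)) x
        (EuclideanSpace.single i 1) = 2 := by
    intro i
    rw [fderiv_Sq_fun i, ((hproj i x).const_mul 2).fderiv]
    simp [EuclideanSpace.single_apply]
  rw [Finset.sum_congr rfl (fun i _ => step i)]
  simp [Finset.card_univ, mul_comm]

lemma differentiableAt_fderiv_Sq (i : Fin n) (x : EuclideanSpace ℝ (Fin n)) :
    DifferentiableAt ℝ (fun y => fderiv ℝ Sq y (EuclideanSpace.single i 1)) x := by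
  rw [fderiv_Sq_fun i]
  exact ((hproj i x).const_mul 2).differentiableAt

lemma lap_combo_s7 (ν : Fin n) (u : EuclideanSpace ℝ (Fin n) → ℝ) (c₁ c₂ : ℝ)
    {U : Set (EuclideanSpace ℝ (Fin n))} (hU : IsOpen U)
    {x : EuclideanSpace ℝ (Fin n)} (hx : x ∈ U)
    (hSq : ∀ y ∈ U, Sq y ≠ 0)
    (hud : ∀ y ∈ U, DifferentiableAt ℝ u y)
    (hud2 : ∀ i : Fin n,
      DifferentiableAt ℝ (fun y => fderiv ℝ u y (EuclideanSpace.single i 1)) x) :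
    lap (fun y => u y + (c₁ * Vh ν y + c₂ * Sq y)) x
      = lap u x + (c₁ * lap (Vh ν) x + c₂ * lap Sq x) := by
  unfold lap
  have step : ∀ i : Fin n,
      fderiv ℝ (fun y => fderiv ℝ (fun z => u z + (c₁ * Vh ν z + c₂ * Sq z)) y
          (EuclideanSpace.single i 1)) x (EuclideanSpace.single i 1)
      = fderiv ℝ (fun y => fderiv ℝ u y (EuclideanSpace.single i 1)) x
          (EuclideanSpace.single i 1)
        + (c₁ * fderiv ℝ (fun y => fderiv ℝ (Vh ν) y (EuclideanSpace.single i 1)) x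
            (EuclideanSpace.single i 1)
          + c₂ * fderiv ℝ (fun y => fderiv ℝ Sq y (EuclideanSpace.single i 1)) x
            (EuclideanSpace.single i 1)) := by
    intro i
    have hev : (fun y => fderiv ℝ (fun z => u z + (c₁ * Vh ν z + c₂ * Sq z)) y
        (EuclideanSpace.single i 1))
        =ᶠ[nhds x] (fun y => fderiv ℝ u y (EuclideanSpace.single i 1)
          + (c₁ * fderiv ℝ (Vh ν) y (EuclideanSpace.single i 1)
            + c₂ * fderiv ℝ Sq y (EuclideanSpace.single i 1))) := by
      filter_upwards [hU.mem_nhds hx] with y hy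
      have h1 : HasFDerivAt u (fderiv ℝ u y) y := (hud y hy).hasFDerivAt
      have h2 := (hasFDerivAt_Vh ν (hSq y hy)).const_mul c₁
      have h3 := (hasFDerivAt_Sq y).const_mul c₂
      have hg : HasFDerivAt (fun z => u z + (c₁ * Vh ν z + c₂ * Sq z)) _ y := h1.add (h2.add h3)
      rw [hg.fderiv, (hasFDerivAt_Vh ν (hSq y hy)).fderiv, (hasFDerivAt_Sq y).fderiv]
      simp only [ContinuousLinearMap.add_apply, ContinuousLinearMap.smul_apply, smul_eq_mul]
    rw [hev.fderiv_eq]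
    have hA := (hud2 i).hasFDerivAt
    have hB := (differentiableAt_fderiv_Vh ν i (hSq x hx)).hasFDerivAt.const_mul c₁
    have hC := (differentiableAt_fderiv_Sq i x).hasFDerivAt.const_mul c₂
    have hABC : HasFDerivAt (fun y => fderiv ℝ u y (EuclideanSpace.single i 1)
        + (c₁ * fderiv ℝ (Vh ν) y (EuclideanSpace.single i 1)
          + c₂ * fderiv ℝ Sq y (EuclideanSpace.single i 1))) _ x := hA.add (hB.add hC)
    rw [hABC.fderiv]
    simp only [ContinuousLinearMap.add_apply, ContinuousLinearMap.smul_apply, smul_eq_mul]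
  rw [Finset.sum_congr rfl (fun i _ => step i)]
  rw [Finset.sum_add_distrib, Finset.sum_add_distrib, Finset.mul_sum, Finset.mul_sum]



lemma second_deriv_nonneg_of_localmin {h : ℝ → ℝ} {c : ℝ}
    (hmin : IsLocalMin h 0)
    (hdiff : ∀ᶠ t in nhds (0:ℝ), DifferentiableAt ℝ h t)
    (hd2 : HasDerivAt (deriv h) c 0) : 0 ≤ c := by
  by_contra hc
  push_neg at hc
  have hd0 : deriv h 0 = 0 := hmin.deriv_eq_zero
  have hslope : Filter.Tendsto (slope (deriv h) 0) (nhdsWithin 0 {(0:ℝ)}ᶜ) (nhds c) :=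
    hasDerivAt_iff_tendsto_slope.1 hd2
  have hev : ∀ᶠ t in nhdsWithin 0 {(0:ℝ)}ᶜ, slope (deriv h) 0 t < 0 :=
    hslope.eventually (gt_mem_nhds hc)
  have hev' : ∀ᶠ t in nhds (0:ℝ), t ∈ ({(0:ℝ)}ᶜ : Set ℝ) → slope (deriv h) 0 t < 0 :=
    eventually_nhdsWithin_iff.1 hev
  obtain ⟨δ₁, hδ₁pos, hδ₁⟩ := Metric.eventually_nhds_iff.1 hdiff
  obtain ⟨δ₂, hδ₂pos, hδ₂⟩ := Metric.eventually_nhds_iff.1 (hmin : ∀ᶠ t in nhds (0:ℝ), h 0 ≤ h t)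
  obtain ⟨δ₃, hδ₃pos, hδ₃⟩ := Metric.eventually_nhds_iff.1 hev'
  set t₀ : ℝ := (min δ₁ (min δ₂ δ₃)) / 2 with ht₀def
  have ht₀pos : 0 < t₀ := by positivity
  have ht₀1 : t₀ < δ₁ := by
    have := min_le_left δ₁ (min δ₂ δ₃); linarith
  have ht₀2 : t₀ < δ₂ := by
    have h1 := min_le_right δ₁ (min δ₂ δ₃); have h2 := min_le_left δ₂ δ₃; linarith
  have ht₀3 : t₀ < δ₃ := by
    have h1 := min_le_right δ₁ (min δ₂ δ₃); have h2 := min_le_right δ₂ δ₃; linarith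
  have hdiffIcc : ∀ t ∈ Set.Icc (0:ℝ) t₀, DifferentiableAt ℝ h t := by
    intro t ht
    apply hδ₁
    rw [Real.dist_eq, sub_zero, abs_of_nonneg ht.1]
    exact lt_of_le_of_lt ht.2 ht₀1
  have hanti : StrictAntiOn h (Set.Icc 0 t₀) := by
    apply strictAntiOn_of_deriv_neg (convex_Icc 0 t₀)
    · exact fun t ht => (hdiffIcc t ht).continuousAt.continuousWithinAt
    · intro t ht
      rw [interior_Icc] at ht
      have hdist : dist t 0 < δ₃ := by
        rw [Real.dist_eq, sub_zero, abs_of_pos ht.1]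
        exact lt_trans ht.2 ht₀3
      have hs := hδ₃ hdist (by simpa using ne_of_gt ht.1)
      have : slope (deriv h) 0 t = deriv h t / t := by
        simp [slope, hd0, div_eq_inv_mul]
      rw [this] at hs
      exact lt_of_not_ge fun hge => absurd (div_nonneg hge (le_of_lt ht.1)) (not_le.2 hs)
  have hlt : h t₀ < h 0 :=
    hanti (Set.left_mem_Icc.2 (le_of_lt ht₀pos)) (Set.right_mem_Icc.2 (le_of_lt ht₀pos)) ht₀pos
  have hge : h 0 ≤ h t₀ := hδ₂ (by rw [Real.dist_eq, sub_zero, abs_of_pos ht₀pos]; exact ht₀2)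
  linarith


lemma lap_nonneg_of_isLocalMin {n : ℕ} {g : EuclideanSpace ℝ (Fin n) → ℝ}
    {x : EuclideanSpace ℝ (Fin n)} {U : Set (EuclideanSpace ℝ (Fin n))}
    (hU : IsOpen U) (hx : x ∈ U)
    (hdiff : ∀ y ∈ U, DifferentiableAt ℝ g y)
    (hdiff2 : ∀ i : Fin n, DifferentiableAt ℝ
      (fun y => fderiv ℝ g y (EuclideanSpace.single i 1)) x)
    (hmin : IsLocalMin g x) : 0 ≤ lap g x := by
  unfold lap
  apply Finset.sum_nonneg
  intro i _
  set e := EuclideanSpace.single i (1:ℝ) with he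
  set q : EuclideanSpace ℝ (Fin n) → ℝ := fun y => fderiv ℝ g y e with hq
  set γ : ℝ → EuclideanSpace ℝ (Fin n) := fun t => x + t • e with hγdef
  have hγd : ∀ t : ℝ, HasDerivAt γ e t := fun t => by
    simpa only [one_smul] using ((hasDerivAt_id' t).smul_const e).const_add x
  have hγc : Continuous γ := by
    exact continuous_const.add (continuous_id.smul continuous_const)
  have hγ0 : γ 0 = x := by simp [hγdef]
  set h : ℝ → ℝ := fun t => g (γ t) with hh
  have hmemT : ∀ᶠ t in nhds (0:ℝ), γ t ∈ U := by
    have : Filter.Tendsto γ (nhds 0) (nhds x) := by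
      have h2 := hγc.continuousAt (x := (0:ℝ)); rw [ContinuousAt] at h2; rwa [hγ0] at h2
    exact this.eventually (hU.eventually_mem hx)
  have hder : ∀ t : ℝ, γ t ∈ U → HasDerivAt h (q (γ t)) t := fun t ht =>
    (hdiff _ ht).hasFDerivAt.comp_hasDerivAt t (hγd t)
  have hdiffh : ∀ᶠ t in nhds (0:ℝ), DifferentiableAt ℝ h t := by
    filter_upwards [hmemT] with t ht using (hder t ht).differentiableAt
  have hderiv_eq : deriv h =ᶠ[nhds (0:ℝ)] fun t => q (γ t) := by
    filter_upwards [hmemT] with t ht using (hder t ht).deriv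
  have hq' : HasDerivAt (fun t => q (γ t)) (fderiv ℝ q x e) 0 := by
    have hd : HasFDerivAt q (fderiv ℝ q x) (γ 0) := by
      rw [hγ0]; exact (hdiff2 i).hasFDerivAt
    exact hd.comp_hasDerivAt 0 (hγd 0)
  have hd2 : HasDerivAt (deriv h) (fderiv ℝ q x e) 0 :=
    hq'.congr_of_eventuallyEq hderiv_eq
  have hminh : IsLocalMin h 0 := by
    have htend : Filter.Tendsto γ (nhds 0) (nhds x) := by
      have h2 := hγc.continuousAt (x := (0:ℝ)); rw [ContinuousAt] at h2; rwa [hγ0] at h2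
    have := htend.eventually hmin
    refine Filter.Eventually.mono this (fun t ht => ?_)
    simpa [hh, hγ0] using ht
  exact second_deriv_nonneg_of_localmin hminh hdiffh hd2

lemma coord_le_norm (y : EuclideanSpace ℝ (Fin n)) (i : Fin n) : y i ≤ ‖y‖ := by
  have h1 : y i * y i ≤ Sq y := by
    apply Finset.single_le_sum (f := fun j => y j * y j)
    · intro j _; exact mul_self_nonneg _
    · exact Finset.mem_univ i
  rw [Sq_eq_norm] at h1
  nlinarith [norm_nonneg y]

lemma Vh_eq (ν : Fin n) {y : EuclideanSpace ℝ (Fin n)} (hy : 0 < ‖y‖) :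
    Vh ν y = y ν * (‖y‖ ^ n)⁻¹ := by
  rw [Vh, Sq_eq_norm]
  congr 1
  rw [← Real.rpow_natCast ‖y‖ 2, ← Real.rpow_mul hy.le]
  rw [show ((2:ℕ):ℝ) * (-(n:ℝ)/2) = -(n:ℝ) by push_cast; ring]
  rw [Real.rpow_neg hy.le, Real.rpow_natCast]

lemma mem_closure_halfspace {R : ℝ} (ν : Fin n) {y : EuclideanSpace ℝ (Fin n)}
    (h1 : 0 ≤ y ν) (h2 : R ≤ ‖y‖) :
    y ∈ closure {x : EuclideanSpace ℝ (Fin n) | 0 < x ν ∧ R < ‖x‖} := by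
  have hcont : Continuous (fun δ : ℝ => y + δ • EuclideanSpace.single ν (1:ℝ)) :=
    continuous_const.add (continuous_id.smul continuous_const)
  have htend : Filter.Tendsto (fun δ : ℝ => y + δ • EuclideanSpace.single ν (1:ℝ))
      (nhdsWithin 0 (Set.Ioi 0)) (nhds y) := by
    have h := hcont.tendsto 0
    simp only [zero_smul, add_zero] at h
    exact h.mono_left nhdsWithin_le_nhds
  refine mem_closure_of_tendsto htend ?_
  filter_upwards [self_mem_nhdsWithin] with δ (hδ : 0 < δ)
  constructor
  · have : (y + δ • EuclideanSpace.single ν (1:ℝ)) ν = y ν + δ := by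
      simp [EuclideanSpace.single_apply]
    rw [this]; linarith
  · have hnormsq : ‖y + δ • EuclideanSpace.single ν (1:ℝ)‖ ^ 2
        = ‖y‖ ^ 2 + 2 * (δ * y ν) + δ ^ 2 := by
      rw [norm_add_sq_real]
      congr 2
      · rw [real_inner_smul_right, EuclideanSpace.inner_single_right]
        simp [mul_comm]
      · rw [norm_smul, EuclideanSpace.norm_single]
        simp [abs_of_pos hδ, mul_pow]
    have hnn := norm_nonneg (y + δ • EuclideanSpace.single ν (1:ℝ))
    nlinarith [norm_nonneg y]

/-- Exterior comparison (Lemma 2.4): a nonnegative superharmonic function on the exterior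
half-space region, vanishing on the boundary hyperplane outside `B_R`, is bounded below
by `m·Rⁿ·xₙ/|x|ⁿ` where `m = inf { u(y)/yₙ : y ∈ ∂B_R, yₙ > 0 }`. -/
theorem stmt7 (hn : 3 ≤ n) (R : ℝ) (hR : 0 < R)
    (u : EuclideanSpace ℝ (Fin n) → ℝ) (m : ℝ)
    (E : Set (EuclideanSpace ℝ (Fin n)))
    (hE : E = {x | 0 < x ⟨n - 1, by omega⟩ ∧ R < ‖x‖})
    (hcont : ContinuousOn u (closure E))
    (hu2 : ContDiffOn ℝ 2 u E)
    (hsuper : ∀ x ∈ E, lap u x ≤ 0)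
    (hnonneg : ∀ x ∈ closure E, 0 ≤ u x)
    (hbdry : ∀ x : EuclideanSpace ℝ (Fin n),
      x ⟨n - 1, by omega⟩ = 0 → R < ‖x‖ → u x = 0)
    (hm : IsGLB {r : ℝ | ∃ y : EuclideanSpace ℝ (Fin n),
      ‖y‖ = R ∧ 0 < y ⟨n - 1, by omega⟩ ∧ r = u y / y ⟨n - 1, by omega⟩} m) :
    ∀ x : EuclideanSpace ℝ (Fin n), 0 < x ⟨n - 1, by omega⟩ → R ≤ ‖x‖ →
      m * R ^ n * x ⟨n - 1, by omega⟩ / ‖x‖ ^ n ≤ u x := by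
  subst hE
  set ν : Fin n := ⟨n - 1, by omega⟩ with hν
  set E : Set (EuclideanSpace ℝ (Fin n)) := {x | 0 < x ν ∧ R < ‖x‖} with hEdef
  have hEopen : IsOpen E := by
    apply IsOpen.inter
    · exact isOpen_lt continuous_const (EuclideanSpace.proj (𝕜 := ℝ) ν).continuous
    · exact isOpen_lt continuous_const continuous_norm
  have hclosE : ∀ y : EuclideanSpace ℝ (Fin n), 0 ≤ y ν → R ≤ ‖y‖ → y ∈ closure E :=
    fun y h1 h2 => mem_closure_halfspace ν h1 h2
  -- m is nonnegative
  have hm0 : 0 ≤ m := by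
    apply hm.2
    rintro r ⟨y, hy1, hy2, rfl⟩
    have hyc : y ∈ closure E := hclosE y (le_of_lt hy2) (le_of_eq hy1.symm)
    exact div_nonneg (hnonneg y hyc) (le_of_lt hy2)
  have hsphere : ∀ y : EuclideanSpace ℝ (Fin n), ‖y‖ = R → 0 < y ν → m * y ν ≤ u y := by
    intro y h1 h2
    have hmem : m ≤ u y / y ν := hm.1 ⟨y, h1, h2, rfl⟩
    exact (le_div_iff₀ h2).mp hmem
  intro x hxν hxR
  show m * R ^ n * x ν / ‖x‖ ^ n ≤ u x
  rcases eq_or_lt_of_le hxR with heq | hlt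
  · -- on the sphere
    have h1 := hsphere x heq.symm hxν
    have hRn : R ^ n ≠ 0 := by positivity
    rw [← heq]
    rw [show m * R ^ n * x ν / R ^ n = m * x ν by field_simp]
    exact h1
  · -- exterior case
    have hxE : x ∈ E := ⟨hxν, hlt⟩
    have hkey : ∀ δ : ℝ, 0 < δ → m * R ^ n * x ν / ‖x‖ ^ n ≤ u x + δ := by
      intro δ hδ
      set ρ : ℝ := max (‖x‖ + 1) (2 * m * R ^ n / δ + 1) with hρdef
      have hρx : ‖x‖ < ρ := lt_of_lt_of_le (by linarith) (le_max_left _ _)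
      have hρ1 : 1 ≤ ρ := le_trans (by nlinarith [norm_nonneg x]) (le_max_left _ _)
      have hρ0 : 0 < ρ := by linarith
      have hρR : R < ρ := lt_of_le_of_lt hxR hρx
      have hρtail : 2 * m * R ^ n / δ + 1 ≤ ρ := le_max_right _ _
      set ε : ℝ := δ / (2 * ρ ^ 2) with hεdef
      have hε : 0 < ε := by positivity
      set c₁ : ℝ := -(m * R ^ n) with hc₁
      set c₂ : ℝ := -ε with hc₂
      set g : EuclideanSpace ℝ (Fin n) → ℝ := fun y => u y + (c₁ * Vh ν y + c₂ * Sq y)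
        with hgdef
      set K : Set (EuclideanSpace ℝ (Fin n)) :=
        {y | 0 ≤ y ν ∧ R ≤ ‖y‖ ∧ ‖y‖ ≤ ρ} with hKdef
      have hKcl : IsClosed K := by
        have : K = {y : EuclideanSpace ℝ (Fin n) | 0 ≤ y ν}
            ∩ ({y : EuclideanSpace ℝ (Fin n) | R ≤ ‖y‖}
              ∩ {y : EuclideanSpace ℝ (Fin n) | ‖y‖ ≤ ρ}) := rfl
        rw [this]
        exact (isClosed_le continuous_const
            (EuclideanSpace.proj (𝕜 := ℝ) ν).continuous).inter
          ((isClosed_le continuous_const continuous_norm).inter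
            (isClosed_le continuous_norm continuous_const))
      have hKcpt : IsCompact K := by
        apply IsCompact.of_isClosed_subset (isCompact_closedBall (0:EuclideanSpace ℝ (Fin n)) ρ)
          hKcl
        intro y hy
        rw [Metric.mem_closedBall, dist_zero_right]
        exact hy.2.2
      have hKE : K ⊆ closure E := fun y hy => hclosE y hy.1 hy.2.1
      have hnormK : ∀ y ∈ K, 0 < ‖y‖ := fun y hy => lt_of_lt_of_le hR hy.2.1
      have hSqK : ∀ y ∈ K, Sq y ≠ 0 := by
        intro y hy
        rw [Sq_eq_norm]
        have := hnormK y hy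
        positivity
      have hxK : x ∈ K := ⟨le_of_lt hxν, hxR, le_of_lt hρx⟩
      have hgc : ContinuousOn g K := by
        apply ContinuousOn.add (hcont.mono hKE)
        apply ContinuousOn.add
        · exact continuousOn_const.mul (fun y hy =>
            ((hasFDerivAt_Vh ν (hSqK y hy)).differentiableAt.continuousAt).continuousWithinAt)
        · exact continuousOn_const.mul Sq_continuous.continuousOn
      obtain ⟨x₀, hx₀K, hx₀min⟩ := hKcpt.exists_isMinOn ⟨x, hxK⟩ hgc
      set U : Set (EuclideanSpace ℝ (Fin n)) := E ∩ Metric.ball 0 ρ with hUdef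
      have hUopen : IsOpen U := hEopen.inter Metric.isOpen_ball
      have hUK : U ⊆ K := by
        rintro y ⟨hyE, hyB⟩
        rw [Metric.mem_ball, dist_zero_right] at hyB
        exact ⟨le_of_lt hyE.1, le_of_lt hyE.2, le_of_lt hyB⟩
      have hSqU : ∀ y ∈ U, Sq y ≠ 0 := fun y hy => hSqK y (hUK hy)
      -- x₀ cannot be an interior point
      have hx₀notU : x₀ ∉ U := by
        intro hx₀U
        have hloc : IsLocalMin g x₀ :=
          hx₀min.isLocalMin (Filter.mem_of_superset (hUopen.mem_nhds hx₀U) hUK)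
        have hudU : ∀ y ∈ U, DifferentiableAt ℝ u y := by
          intro y hy
          exact (hu2.contDiffAt (hEopen.mem_nhds hy.1)).differentiableAt (by norm_num)
        have hud2 : ∀ i : Fin n,
            DifferentiableAt ℝ (fun y => fderiv ℝ u y (EuclideanSpace.single i 1)) x₀ := by
          intro i
          have hcdAt : ContDiffAt ℝ 2 u x₀ := hu2.contDiffAt (hEopen.mem_nhds hx₀U.1)
          have h1 : ContDiffAt ℝ 1 (fderiv ℝ u) x₀ := hcdAt.fderiv_right (by norm_num)
          have h2 : DifferentiableAt ℝ (fderiv ℝ u) x₀ := h1.differentiableAt (by norm_num)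
          exact ((ContinuousLinearMap.apply ℝ ℝ
            (EuclideanSpace.single i 1)).differentiableAt).comp x₀ h2
        have hgd : ∀ y ∈ U, DifferentiableAt ℝ g y := by
          intro y hy
          exact (hudU y hy).add
            ((((hasFDerivAt_Vh ν (hSqU y hy)).differentiableAt).const_mul c₁).add
              (((hasFDerivAt_Sq y).differentiableAt).const_mul c₂))
        have hgd2 : ∀ i : Fin n,
            DifferentiableAt ℝ (fun y => fderiv ℝ g y (EuclideanSpace.single i 1)) x₀ := by
          intro i
          have hev : (fun y => fderiv ℝ u y (EuclideanSpace.single i 1)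
              + (c₁ * fderiv ℝ (Vh ν) y (EuclideanSpace.single i 1)
                + c₂ * fderiv ℝ Sq y (EuclideanSpace.single i 1)))
              =ᶠ[nhds x₀] (fun y => fderiv ℝ g y (EuclideanSpace.single i 1)) := by
            filter_upwards [hUopen.mem_nhds hx₀U] with y hy
            have h1 : HasFDerivAt u (fderiv ℝ u y) y := (hudU y hy).hasFDerivAt
            have h2 := (hasFDerivAt_Vh ν (hSqU y hy)).const_mul c₁
            have h3 := (hasFDerivAt_Sq y).const_mul c₂
            have hg' : HasFDerivAt (fun y => u y + (c₁ * Vh ν y + c₂ * Sq y)) _ y := h1.add (h2.add h3)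
            rw [hgdef]
            rw [hg'.fderiv, (hasFDerivAt_Vh ν (hSqU y hy)).fderiv, (hasFDerivAt_Sq y).fderiv]
            simp only [ContinuousLinearMap.add_apply, ContinuousLinearMap.smul_apply,
              smul_eq_mul]
          have hdRHS : DifferentiableAt ℝ (fun y => fderiv ℝ u y (EuclideanSpace.single i 1)
              + (c₁ * fderiv ℝ (Vh ν) y (EuclideanSpace.single i 1)
                + c₂ * fderiv ℝ Sq y (EuclideanSpace.single i 1))) x₀ :=
            (hud2 i).add (((differentiableAt_fderiv_Vh ν i (hSqU x₀ hx₀U)).const_mul c₁).add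
              ((differentiableAt_fderiv_Sq i x₀).const_mul c₂))
          exact hdRHS.congr_of_eventuallyEq hev.symm
        have hlap_nonneg := lap_nonneg_of_isLocalMin hUopen hx₀U hgd hgd2 hloc
        have hcombo := lap_combo_s7 ν u c₁ c₂ hUopen hx₀U hSqU hudU hud2
        have hSqpos : 0 < Sq x₀ := by
          rw [Sq_eq_norm]
          have := hnormK x₀ (hUK hx₀U)
          positivity
        rw [lap_Vh ν hSqpos, lap_Sq] at hcombo
        have hsup := hsuper x₀ hx₀U.1
        rw [hc₁, hc₂] at hcombo
        have hnR : (3:ℝ) ≤ (n:ℝ) := by exact_mod_cast hn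
        have hnpos : (0:ℝ) < 2 * (n:ℝ) := by linarith
        have hprod : 0 < ε * (2 * (n:ℝ)) := mul_pos hε hnpos
        linarith
      -- boundary bound
      have hB : -(m * R ^ n * (ρ ^ (n-1))⁻¹) - ε * ρ ^ 2
          ≤ u x₀ + (c₁ * Vh ν x₀ + c₂ * Sq x₀) := by
        obtain ⟨h0ν, hRle, hleρ⟩ := id hx₀K
        have hu0 : 0 ≤ u x₀ := hnonneg x₀ (hKE hx₀K)
        have hSqle : Sq x₀ ≤ ρ ^ 2 := by
          rw [Sq_eq_norm]
          exact pow_le_pow_left₀ (norm_nonneg _) hleρ 2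
        have hSq0 : 0 ≤ Sq x₀ := by rw [Sq_eq_norm]; positivity
        have htail0 : 0 ≤ m * R ^ n * (ρ ^ (n-1))⁻¹ := by positivity
        rcases eq_or_lt_of_le h0ν with h0 | hpos
        · -- x₀ ν = 0
          have hV0 : Vh ν x₀ = 0 := by rw [Vh, ← h0]; ring
          have h1 : ε * Sq x₀ ≤ ε * ρ ^ 2 := mul_le_mul_of_nonneg_left hSqle hε.le
          rw [hV0, hc₁, hc₂]
          linarith
        · rcases eq_or_lt_of_le hRle with hRe | hRlt
          · -- ‖x₀‖ = R
            have hus := hsphere x₀ hRe.symm hpos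
            have hVeq : Vh ν x₀ = x₀ ν * (R ^ n)⁻¹ := by
              rw [Vh_eq ν (by rw [← hRe]; exact hR), ← hRe]
            have hRn : (0:ℝ) < R ^ n := by positivity
            rw [hVeq, hc₁, hc₂]
            have heqP : m * R ^ n * (x₀ ν * (R ^ n)⁻¹) = m * x₀ ν := by
              field_simp
            have h1 : ε * Sq x₀ ≤ ε * ρ ^ 2 := mul_le_mul_of_nonneg_left hSqle hε.le
            linarith
          · -- x₀ ∈ E, so ‖x₀‖ = ρ
            have hx₀E : x₀ ∈ E := ⟨hpos, hRlt⟩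
            have hρeq : ‖x₀‖ = ρ := by
              by_contra hne
              exact hx₀notU ⟨hx₀E, by
                rw [Metric.mem_ball, dist_zero_right]
                exact lt_of_le_of_ne hleρ hne⟩
            have hVeq : Vh ν x₀ = x₀ ν * (ρ ^ n)⁻¹ := by
              rw [Vh_eq ν (by rw [hρeq]; exact hρ0), hρeq]
            have hcoord : x₀ ν ≤ ρ := by
              rw [← hρeq]; exact coord_le_norm x₀ ν
            have hVle : Vh ν x₀ ≤ (ρ ^ (n-1))⁻¹ := by
              rw [hVeq]
              have hρn : ρ ^ n = ρ ^ (n-1) * ρ := by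
                rw [← pow_succ]
                congr 1
                omega
              rw [hρn, mul_inv]
              rw [show x₀ ν * ((ρ ^ (n-1))⁻¹ * ρ⁻¹) = (x₀ ν * ρ⁻¹) * (ρ ^ (n-1))⁻¹ by ring]
              have h1 : x₀ ν * ρ⁻¹ ≤ 1 := by
                rw [← div_eq_mul_inv, div_le_one hρ0]; exact hcoord
              have h2 : (0:ℝ) ≤ (ρ ^ (n-1))⁻¹ := by positivity
              calc x₀ ν * ρ⁻¹ * (ρ ^ (n-1))⁻¹ ≤ 1 * (ρ ^ (n-1))⁻¹ :=
                    mul_le_mul_of_nonneg_right h1 h2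
                _ = (ρ ^ (n-1))⁻¹ := one_mul _
            have hV0 : 0 ≤ Vh ν x₀ := by
              rw [hVeq]; positivity
            rw [hc₁, hc₂]
            have hmR : 0 ≤ m * R ^ n := by positivity
            have h1 : ε * Sq x₀ ≤ ε * ρ ^ 2 := mul_le_mul_of_nonneg_left hSqle hε.le
            have h2 : m * R ^ n * Vh ν x₀ ≤ m * R ^ n * (ρ ^ (n-1))⁻¹ :=
              mul_le_mul_of_nonneg_left hVle hmR
            linarith
      -- conclude
      have hgx : u x₀ + (c₁ * Vh ν x₀ + c₂ * Sq x₀)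
          ≤ u x + (c₁ * Vh ν x + c₂ * Sq x) := hx₀min hxK
      have hVx : Vh ν x = x ν * (‖x‖ ^ n)⁻¹ := Vh_eq ν (lt_trans hR hlt)
      have hSqx : 0 ≤ Sq x := by rw [Sq_eq_norm]; positivity
      have htail1 : m * R ^ n * (ρ ^ (n-1))⁻¹ ≤ δ / 2 := by
        have hρpow : ρ ≤ ρ ^ (n-1) := le_self_pow₀ hρ1 (by omega)
        have hρn1 : (0:ℝ) < ρ ^ (n-1) := by positivity
        have h1 : 2 * m * R ^ n / δ ≤ ρ ^ (n-1) := by linarith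
        have h2 : δ / 2 * (2 * m * R ^ n / δ) = m * R ^ n := by field_simp
        have hkey2 : m * R ^ n ≤ δ / 2 * ρ ^ (n-1) := by
          have h3 := mul_le_mul_of_nonneg_left h1 (by positivity : (0:ℝ) ≤ δ / 2)
          linarith
        calc m * R ^ n * (ρ ^ (n-1))⁻¹ ≤ (δ / 2 * ρ ^ (n-1)) * (ρ ^ (n-1))⁻¹ :=
              mul_le_mul_of_nonneg_right hkey2 (inv_nonneg.2 hρn1.le)
          _ = δ / 2 := by field_simp
      have htail2 : ε * ρ ^ 2 = δ / 2 := by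
        rw [hεdef]
        field_simp
      have hgoal : m * R ^ n * x ν / ‖x‖ ^ n = m * R ^ n * Vh ν x := by
        rw [hVx, div_eq_mul_inv, mul_assoc]
      rw [hgoal]
      rw [hc₁, hc₂] at hgx
      have hεSqx : 0 ≤ ε * Sq x := mul_nonneg hε.le hSqx
      linarith
    by_contra hcon
    push_neg at hcon
    have := hkey ((m * R ^ n * x ν / ‖x‖ ^ n - u x) / 2) (by linarith)
    linarith
end
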